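/- Let m ≥ 1, let F : Fin m → M_d be matrices with tr(F_α) = 0 for all α and tr(F_α† F_β) = δ_{αβ}, and let G be an m×m positive semidefinite complex matrix. Define the purely dissipative generator L : M_d → M_d by L(ρ) = Σ_{α,β} G_{αβ} ( F_α ρ F_β† − ½ (F_β† F_α ρ + ρ F_β† F_α) ). Then ‖L‖ ≤ 2 · tr G, where ‖L‖ is the operator norm of L with respect to the Frobenius (Hilbert–Schmidt) norm on M_d, i.e., ‖L‖ = sup over ‖A‖₂ = 1 of ‖L(A)‖₂. -/

import Mathlib

open Matrix
open scoped Kronecker ComplexOrder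

noncomputable section

/-- `Mat d` is the space `M_d` of `d × d` complex matrices. -/
abbrev Mat (d : ℕ) := Matrix (Fin d) (Fin d) ℂ

/- Equip `M_d` with the Frobenius (Hilbert-Schmidt) norm, making the continuous linear
endomorphisms of `M_d` a Banach algebra with the induced operator norm. -/
attribute [local instance] Matrix.frobeniusNormedAddCommGroup Matrix.frobeniusNormedSpace

lemma frob_sq {d : ℕ} (M : Mat d) : ‖M‖ ^ 2 = ((Mᴴ * M).trace).re := by
  have h : ‖M‖ = (∑ i, ∑ j, ‖M i j‖ ^ (2:ℝ)) ^ (1/2 : ℝ) := Matrix.frobenius_norm_def M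
  have hnn : (0:ℝ) ≤ ∑ i, ∑ j, ‖M i j‖ ^ (2:ℝ) := by positivity
  have h2 : ‖M‖ ^ 2 = ∑ i, ∑ j, ‖M i j‖ ^ 2 := by
    rw [h, ← Real.rpow_natCast _ 2, ← Real.rpow_mul hnn]
    norm_num [Real.rpow_natCast]
  rw [h2]
  simp only [Matrix.trace, Matrix.diag_apply, Matrix.mul_apply, Matrix.conjTranspose_apply]
  rw [Complex.re_sum, Finset.sum_comm]
  congr 1; ext i
  rw [Complex.re_sum]
  congr 1; ext j
  have : (star (M j i) * M j i) = (Complex.normSq (M j i) : ℂ) := by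
    simp [Complex.normSq_eq_conj_mul_self]
  rw [this]
  rw [Complex.ofReal_re, Complex.sq_norm]

variable {d m : ℕ}

lemma conjT_sum (F : Fin m → Mat d) (c : Fin m → ℂ) :
    (∑ α, c α • F α)ᴴ = ∑ β, star (c β) • (F β)ᴴ := by
  rw [conjTranspose_sum]
  simp [conjTranspose_smul]

lemma exp1 (F : Fin m → Mat d) (c : Fin m → ℂ) (ρ : Mat d) :
    (∑ α, c α • F α) * ρ * (∑ α, c α • F α)ᴴ
      = ∑ α, ∑ β, (c α * star (c β)) • (F α * ρ * (F β)ᴴ) := by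
  rw [conjT_sum, Finset.sum_mul, Finset.mul_sum]
  simp only [Finset.sum_mul, smul_mul_assoc, Finset.mul_sum, mul_smul_comm,
    Finset.smul_sum, smul_smul]
  rw [Finset.sum_comm]
  exact Finset.sum_congr rfl fun α _ => Finset.sum_congr rfl fun β _ => by rw [mul_comm]

lemma exp2 (F : Fin m → Mat d) (c : Fin m → ℂ) :
    (∑ α, c α • F α)ᴴ * (∑ α, c α • F α)
      = ∑ α, ∑ β, (c α * star (c β)) • ((F β)ᴴ * F α) := by
  rw [conjT_sum, Finset.sum_mul]
  simp only [smul_mul_assoc, Finset.mul_sum, mul_smul_comm, Finset.smul_sum, smul_smul]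
  rw [Finset.sum_comm]

lemma Dexp (F : Fin m → Mat d) (c : Fin m → ℂ) (ρ : Mat d) :
    (∑ α, c α • F α) * ρ * (∑ α, c α • F α)ᴴ -
      (2 : ℂ)⁻¹ • ((∑ α, c α • F α)ᴴ * (∑ α, c α • F α) * ρ +
        ρ * ((∑ α, c α • F α)ᴴ * (∑ α, c α • F α)))
      = ∑ α, ∑ β, (c α * star (c β)) •
        (F α * ρ * (F β)ᴴ -
          (2 : ℂ)⁻¹ • ((F β)ᴴ * F α * ρ + ρ * ((F β)ᴴ * F α))) := by
  rw [exp1, exp2]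
  simp only [Finset.sum_mul, Finset.mul_sum, smul_mul_assoc, mul_smul_comm,
    Finset.smul_sum, smul_sub, smul_add, ← Finset.sum_add_distrib, ← Finset.sum_sub_distrib]
  refine Finset.sum_congr rfl fun α _ => Finset.sum_congr rfl fun β _ => ?_
  simp only [smul_smul, mul_comm]

/-- a purely dissipative Lindblad generator `L` on `M_d` built from
traceless orthonormal operators `F_α` and a positive semidefinite matrix `G`
satisfies `‖L‖ ≤ 2 · tr G`, where `‖L‖` is the operator norm induced by the
Frobenius (Hilbert-Schmidt) norm on `M_d`. -/
theorem norm_dissipative_lindblad_le {d m : ℕ} (hm : 1 ≤ m)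
    (F : Fin m → Mat d)
    (hFtr : ∀ α : Fin m, (F α).trace = 0)
    (hFon : ∀ α β : Fin m, ((F α)ᴴ * F β).trace = if α = β then 1 else 0)
    (G : Matrix (Fin m) (Fin m) ℂ) (hG : G.PosSemidef)
    (L : Mat d →L[ℂ] Mat d)
    (hL : ∀ ρ : Mat d, L ρ =
      ∑ α : Fin m, ∑ β : Fin m, G α β •
        (F α * ρ * (F β)ᴴ -
          (2 : ℂ)⁻¹ • ((F β)ᴴ * F α * ρ + ρ * ((F β)ᴴ * F α)))) :
    ContinuousLinearMap.opNorm (σ₁₂ := RingHom.id ℂ) (E := Mat d) (F := Mat d) L ≤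
      2 * (G.trace).re := by
  classical
  set S : Matrix (Fin m) (Fin m) ℂ := open scoped MatrixOrder in CFC.sqrt G with hSdef
  have hSH : Sᴴ = S := open scoped MatrixOrder in (CFC.sqrt_nonneg G).posSemidef.1
  have hSS : S * S = G := open scoped MatrixOrder in CFC.sqrt_mul_sqrt_self G hG.nonneg
  set c : Fin m → Fin m → ℂ := fun k α => star (S k α) with hcdef
  set A : Fin m → Mat d := fun k => ∑ α, c k α • F α with hAdef
  -- G entries as sums over k
  have hGk : ∀ α β : Fin m, G α β = ∑ k, c k α * star (c k β) := by
    intro α β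
    rw [← hSS, Matrix.mul_apply]
    refine Finset.sum_congr rfl fun k _ => ?_
    have h1 : S α k = star (S k α) := by
      conv_lhs => rw [← hSH]
      rw [Matrix.conjTranspose_apply]
    rw [h1]
    simp [hcdef]
  -- L as a sum of single-operator Lindblad terms
  have hLk : ∀ ρ : Mat d, L ρ = ∑ k,
      (A k * ρ * (A k)ᴴ - (2 : ℂ)⁻¹ • ((A k)ᴴ * A k * ρ + ρ * ((A k)ᴴ * A k))) := by
    intro ρ
    rw [hL ρ]
    have : ∀ k : Fin m,
        A k * ρ * (A k)ᴴ - (2 : ℂ)⁻¹ • ((A k)ᴴ * A k * ρ + ρ * ((A k)ᴴ * A k))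
          = ∑ α, ∑ β, (c k α * star (c k β)) •
            (F α * ρ * (F β)ᴴ -
              (2 : ℂ)⁻¹ • ((F β)ᴴ * F α * ρ + ρ * ((F β)ᴴ * F α))) := fun k =>
      Dexp F (c k) ρ
    simp only [this]
    conv_rhs => rw [Finset.sum_comm]
    refine Finset.sum_congr rfl fun α _ => ?_
    conv_rhs => rw [Finset.sum_comm]
    refine Finset.sum_congr rfl fun β _ => ?_
    rw [hGk α β, Finset.sum_smul]
  -- norm of each A k
  have hAnorm : ∀ k : Fin m, ‖A k‖ ^ 2 = (G k k).re := by
    intro k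
    rw [frob_sq]
    have : ((A k)ᴴ * A k).trace = G k k := by
      rw [hAdef]
      simp only
      rw [exp2]
      rw [Matrix.trace_sum]
      simp only [Matrix.trace_sum, Matrix.trace_smul, hFon]
      have : ∀ α : Fin m, ∑ β, (c k α * star (c k β)) • (if β = α then (1:ℂ) else 0)
          = c k α * star (c k α) := by
        intro α
        rw [Finset.sum_eq_single α]
        · simp
        · intro b _ hb; simp [hb]
        · simp
      rw [Finset.sum_congr rfl fun α _ => this α]
      rw [← hSS, Matrix.mul_apply]
      refine Finset.sum_congr rfl fun α _ => ?_
      have h1 : S α k = star (S k α) := by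
        conv_lhs => rw [← hSH]
        rw [Matrix.conjTranspose_apply]
      simp [hcdef, h1, mul_comm]
    rw [this]
  have hre_nonneg : ∀ k : Fin m, (0:ℝ) ≤ (G k k).re := by
    intro k; rw [← hAnorm k]; positivity
  have htr : (G.trace).re = ∑ k, (G k k).re := by
    rw [Matrix.trace]
    exact Complex.re_sum _ _
  -- bound per k
  have key : ∀ (k : Fin m) (ρ : Mat d),
      ‖A k * ρ * (A k)ᴴ - (2 : ℂ)⁻¹ • ((A k)ᴴ * A k * ρ + ρ * ((A k)ᴴ * A k))‖
        ≤ 2 * (G k k).re * ‖ρ‖ := by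
    intro k ρ
    have hmulc : ‖(A k)ᴴ‖ = ‖A k‖ := Matrix.frobenius_norm_conjTranspose _
    have h1 : ‖A k * ρ * (A k)ᴴ‖ ≤ ‖A k‖ * ‖ρ‖ * ‖A k‖ := by
      calc ‖A k * ρ * (A k)ᴴ‖ ≤ ‖A k * ρ‖ * ‖(A k)ᴴ‖ := Matrix.frobenius_norm_mul _ _
        _ ≤ (‖A k‖ * ‖ρ‖) * ‖(A k)ᴴ‖ :=
          mul_le_mul_of_nonneg_right (Matrix.frobenius_norm_mul _ _) (norm_nonneg _)
        _ = ‖A k‖ * ‖ρ‖ * ‖A k‖ := by rw [hmulc]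
    have h2 : ‖(A k)ᴴ * A k * ρ‖ ≤ ‖A k‖ * ‖A k‖ * ‖ρ‖ := by
      calc ‖(A k)ᴴ * A k * ρ‖ ≤ ‖(A k)ᴴ * A k‖ * ‖ρ‖ := Matrix.frobenius_norm_mul _ _
        _ ≤ (‖(A k)ᴴ‖ * ‖A k‖) * ‖ρ‖ :=
          mul_le_mul_of_nonneg_right (Matrix.frobenius_norm_mul _ _) (norm_nonneg _)
        _ = ‖A k‖ * ‖A k‖ * ‖ρ‖ := by rw [hmulc]
    have h3 : ‖ρ * ((A k)ᴴ * A k)‖ ≤ ‖ρ‖ * (‖A k‖ * ‖A k‖) := by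
      calc ‖ρ * ((A k)ᴴ * A k)‖ ≤ ‖ρ‖ * ‖(A k)ᴴ * A k‖ := Matrix.frobenius_norm_mul _ _
        _ ≤ ‖ρ‖ * (‖(A k)ᴴ‖ * ‖A k‖) :=
          mul_le_mul_of_nonneg_left (Matrix.frobenius_norm_mul _ _) (norm_nonneg _)
        _ = ‖ρ‖ * (‖A k‖ * ‖A k‖) := by rw [hmulc]
    have hhalf : ‖(2 : ℂ)⁻¹‖ = (2 : ℝ)⁻¹ := by
      rw [norm_inv]; norm_num
    have hGA : ‖A k‖ * ‖A k‖ = (G k k).re := by rw [← hAnorm k]; ring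
    calc ‖A k * ρ * (A k)ᴴ - (2 : ℂ)⁻¹ • ((A k)ᴴ * A k * ρ + ρ * ((A k)ᴴ * A k))‖
        ≤ ‖A k * ρ * (A k)ᴴ‖ + ‖(2 : ℂ)⁻¹ • ((A k)ᴴ * A k * ρ + ρ * ((A k)ᴴ * A k))‖ :=
          norm_sub_le _ _
      _ = ‖A k * ρ * (A k)ᴴ‖ + (2:ℝ)⁻¹ * ‖(A k)ᴴ * A k * ρ + ρ * ((A k)ᴴ * A k)‖ := by
          rw [norm_smul, hhalf]
      _ ≤ ‖A k * ρ * (A k)ᴴ‖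
            + (2:ℝ)⁻¹ * (‖(A k)ᴴ * A k * ρ‖ + ‖ρ * ((A k)ᴴ * A k)‖) := by
          have := norm_add_le ((A k)ᴴ * A k * ρ) (ρ * ((A k)ᴴ * A k))
          nlinarith
      _ ≤ ‖A k‖ * ‖ρ‖ * ‖A k‖
            + (2:ℝ)⁻¹ * (‖A k‖ * ‖A k‖ * ‖ρ‖ + ‖ρ‖ * (‖A k‖ * ‖A k‖)) := by
          nlinarith
      _ = 2 * (‖A k‖ * ‖A k‖) * ‖ρ‖ := by ring
      _ = 2 * (G k k).re * ‖ρ‖ := by rw [hGA]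
  -- conclude
  refine ContinuousLinearMap.opNorm_le_bound L ?_ ?_
  · rw [htr]
    have : (0:ℝ) ≤ ∑ k, (G k k).re := Finset.sum_nonneg fun k _ => hre_nonneg k
    linarith
  · intro ρ
    erw [hLk ρ]
    calc ‖∑ k, (A k * ρ * (A k)ᴴ -
          (2 : ℂ)⁻¹ • ((A k)ᴴ * A k * ρ + ρ * ((A k)ᴴ * A k)))‖
        ≤ ∑ k, ‖A k * ρ * (A k)ᴴ -
          (2 : ℂ)⁻¹ • ((A k)ᴴ * A k * ρ + ρ * ((A k)ᴴ * A k))‖ := norm_sum_le _ _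
      _ ≤ ∑ k, 2 * (G k k).re * ‖ρ‖ := Finset.sum_le_sum fun k _ => key k ρ
      _ = 2 * (G.trace).re * ‖ρ‖ := by
          rw [htr, ← Finset.sum_mul, ← Finset.mul_sum]
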